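/- For all (ℓ,m) ∈ I, the function L_{ℓ,m}(x) = (1−x²)^{1/2} Y_{ℓ,m}(x) is twice differentiable on (−1,1) and satisfies the second-order ODE L_{ℓ,m}''(x) = Q_{ℓ,m}(x) L_{ℓ,m}(x) for all x ∈ (−1,1), where Q_{ℓ,m}(x) = (ℓ²(x² − a_{ℓ,m}²) − (3+x²)/4)/(1−x²)². -/

import Mathlib

open Real Set

/-- Jacobi polynomial `P_j^{(α,α)}` via Rodrigues' formula. -/
noncomputable def jacobiP (j : ℕ) (α : ℝ) (x : ℝ) : ℝ :=
  ((-1 : ℝ) ^ j / (2 ^ j * (Nat.factorial j : ℝ))) * (1 - x ^ 2) ^ (-α) *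
    iteratedDeriv j (fun t : ℝ => (1 - t ^ 2) ^ (α + (j : ℝ))) x

/-- The normalization constant `c_{ℓm}`. -/
noncomputable def cConst (ℓ m : ℝ) : ℝ :=
  Real.sqrt (ℓ * Real.Gamma (ℓ - m + 1/2) * Real.Gamma (ℓ + m + 1/2)) /
    ((2 : ℝ) ^ m * Real.Gamma (ℓ + 1/2))

/-- The function `Y_{ℓ,m}`. -/
noncomputable def Yfun (ℓ m x : ℝ) : ℝ :=
  cConst ℓ m * (1 - x ^ 2) ^ (m / 2) * jacobiP ⌊ℓ - m - 1/2⌋₊ m x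

/-- Membership in the index set `I = {(ℓ,m) ∈ (ℕ/2)² : ℓ - m - 1/2 ∈ ℕ}`. -/
def memI (ℓ m : ℝ) : Prop :=
  (∃ n : ℕ, m = (n : ℝ) / 2) ∧ (∃ j : ℕ, ℓ - m - 1/2 = (j : ℝ))

/-- `b_{ℓ,m} = m / ℓ`. -/
noncomputable def bPt (ℓ m : ℝ) : ℝ := m / ℓ

/-- `a_{ℓ,m} = (1 - b_{ℓ,m}²)^{1/2}`. -/
noncomputable def aPt (ℓ m : ℝ) : ℝ := Real.sqrt (1 - bPt ℓ m ^ 2)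

/-- Membership in `ℕ_k = ℕ + (k-1)/2`. -/
def memNk (k : ℕ) (t : ℝ) : Prop := ∃ n : ℕ, t = (n : ℝ) + ((k : ℝ) - 1) / 2

/-- Membership in `I_d`. -/
def memId (d : ℕ) (ℓ m : ℝ) : Prop := memNk d ℓ ∧ memNk (d - 1) m ∧ m ≤ ℓ

/-- The function `X̃^d_{ℓ,m}`. -/
noncomputable def Xtilde (d : ℕ) (ℓ m x : ℝ) : ℝ :=
  (1 - x ^ 2) ^ (-((d : ℝ) - 2) / 4) * Yfun ℓ m x

/-- `L_{ℓ,m}(x) = (1-x²)^{1/2} Y_{ℓ,m}(x)`. -/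
noncomputable def Lfun (ℓ m : ℝ) : ℝ → ℝ := fun x => Real.sqrt (1 - x ^ 2) * Yfun ℓ m x

/-- The potential `Q_{ℓ,m}`. -/
noncomputable def Qfun (ℓ m x : ℝ) : ℝ :=
  (ℓ ^ 2 * (x ^ 2 - aPt ℓ m ^ 2) - (3 + x ^ 2) / 4) / (1 - x ^ 2) ^ 2


open Polynomial

noncomputable def Ppoly (β : ℝ) : ℕ → Polynomial ℝ
  | 0 => 1
  | (k+1) => (1 - Polynomial.X ^ 2) * (Ppoly β k).derivative -
      Polynomial.C (2 * (β - (k : ℝ))) * Polynomial.X * Ppoly β k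

lemma Ppoly_rec (β : ℝ) (k : ℕ) :
    (1 - Polynomial.X ^ 2) * (Ppoly β k).derivative =
      Ppoly β (k+1) + Polynomial.C (2 * (β - (k : ℝ))) * Polynomial.X * Ppoly β k := by
  rw [Ppoly]; ring

lemma Ppoly_derivative (β : ℝ) (k : ℕ) :
    (Ppoly β (k+1)).derivative =
      Polynomial.C (-((k : ℝ)+1) * (2*β - (k : ℝ))) * Ppoly β k := by
  induction k with
  | zero =>
    simp [Ppoly, derivative_mul]
  | succ k ih =>
    rw [show Ppoly β (k+2) = (1 - Polynomial.X ^ 2) * (Ppoly β (k+1)).derivative -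
      Polynomial.C (2 * (β - ((k:ℝ)+1))) * Polynomial.X * Ppoly β (k+1) by
        rw [Ppoly]; push_cast; ring]
    rw [ih]
    simp only [derivative_mul, derivative_sub, derivative_one, derivative_pow, derivative_X,
      derivative_C, ih, Polynomial.derivative_one]
    push_cast
    simp only [Nat.cast_ofNat, map_mul, map_add, map_sub, map_neg, map_one, map_ofNat]
    have h := Ppoly_rec β k
    simp only [map_mul, map_add, map_sub, map_neg, map_one, map_ofNat] at h
    linear_combination ((-(Polynomial.C (k:ℝ) + 1)) * (2 * Polynomial.C β - Polynomial.C (k:ℝ))) * h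

lemma jacobi_ode (m : ℝ) (j : ℕ) :
    (1 - Polynomial.X^2) * (Ppoly (m + (j:ℝ)) j).derivative.derivative
      - Polynomial.C (2*(m+1)) * Polynomial.X * (Ppoly (m + (j:ℝ)) j).derivative
      + Polynomial.C ((j:ℝ)*((j:ℝ)+2*m+1)) * Ppoly (m + (j:ℝ)) j = 0 := by
  cases j with
  | zero => simp [Ppoly]
  | succ k =>
    rw [Ppoly_derivative, Polynomial.derivative_C_mul]
    have h := Ppoly_rec (m + ((k:ℕ)+1:ℕ)) k
    push_cast at h ⊢
    simp only [map_mul, map_add, map_sub, map_neg, map_one, map_ofNat] at h ⊢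
    linear_combination ((-(Polynomial.C (k:ℝ) + 1)) * (2 * (Polynomial.C m + Polynomial.C (k:ℝ) + 1) - Polynomial.C (k:ℝ))) * h

lemma hasDerivAt_rpoly (c : ℝ) (p : Polynomial ℝ) {x : ℝ} (hx : 0 < 1 - x^2) :
    HasDerivAt (fun t : ℝ => (1 - t^2) ^ c * p.eval t)
      ((1 - x^2) ^ (c - 1) *
        ((-(2*c*x)) * p.eval x + (1 - x^2) * p.derivative.eval x)) x := by
  have h1 : HasDerivAt (fun t : ℝ => 1 - t^2) (-(2*x)) x := by
    simpa using ((hasDerivAt_pow 2 x).const_sub 1)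
  have h2 : HasDerivAt (fun t : ℝ => (1 - t^2) ^ c)
      (c * (1 - x^2) ^ (c - 1) * (-(2*x))) x :=
    (h1.rpow_const (p := c) (Or.inl hx.ne')).congr_deriv (by ring)
  have h3 := h2.mul (p.hasDerivAt x)
  refine h3.congr_deriv ?_
  rw [show (1 - x^2) ^ c = (1 - x^2) ^ (c - 1) * (1 - x^2) by
    rw [← Real.rpow_add_one hx.ne']; ring_nf]
  ring

lemma iteratedDeriv_rpow (β : ℝ) (k : ℕ) :
    ∀ x ∈ Set.Ioo (-1:ℝ) 1,
      iteratedDeriv k (fun t : ℝ => (1 - t^2) ^ β) x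
        = (1 - x^2) ^ (β - (k:ℝ)) * (Ppoly β k).eval x := by
  induction k with
  | zero => intro x hx; simp [Ppoly]
  | succ k ih =>
    intro x hx
    have hw : 0 < 1 - x^2 := by nlinarith [hx.1, hx.2]
    rw [iteratedDeriv_succ]
    have hev : iteratedDeriv k (fun t : ℝ => (1 - t^2) ^ β)
        =ᶠ[nhds x] fun y => (1 - y^2) ^ (β - (k:ℝ)) * (Ppoly β k).eval y :=
      Filter.eventually_of_mem (isOpen_Ioo.mem_nhds hx) ih
    rw [hev.deriv_eq, (hasDerivAt_rpoly (β - (k:ℝ)) (Ppoly β k) hw).deriv]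
    rw [show β - ((k+1:ℕ):ℝ) = β - (k:ℝ) - 1 by push_cast; ring]
    rw [show Ppoly β (k+1) = (1 - Polynomial.X ^ 2) * (Ppoly β k).derivative -
      Polynomial.C (2 * (β - (k : ℝ))) * Polynomial.X * Ppoly β k from rfl]
    simp only [Polynomial.eval_mul, Polynomial.eval_sub, Polynomial.eval_add,
      Polynomial.eval_one, Polynomial.eval_pow, Polynomial.eval_X, Polynomial.eval_C]
    ring

theorem stmt12 (ℓ m : ℝ) (hI : memI ℓ m) :
    (∀ x ∈ Set.Ioo (-1:ℝ) 1, DifferentiableAt ℝ (Lfun ℓ m) x ∧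
        DifferentiableAt ℝ (deriv (Lfun ℓ m)) x) ∧
    ∀ x ∈ Set.Ioo (-1:ℝ) 1,
      deriv (deriv (Lfun ℓ m)) x = Qfun ℓ m x * Lfun ℓ m x := by
  obtain ⟨⟨n, hn⟩, ⟨j, hj⟩⟩ := hI
  have hm0 : 0 ≤ m := by rw [hn]; positivity
  have hl : ℓ = m + (j:ℝ) + 1/2 := by linarith
  have hfloor : ⌊ℓ - m - 1/2⌋₊ = j := by rw [hj]; exact Nat.floor_natCast j
  set P : Polynomial ℝ := Ppoly (m + (j:ℝ)) j with hP
  set K : ℝ := cConst ℓ m * ((-1:ℝ)^j / (2^j * (Nat.factorial j : ℝ))) with hK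
  set s : ℝ := (m+1)/2 with hs
  set Q1 : Polynomial ℝ :=
    Polynomial.C (-(m+1)) * Polynomial.X * P + (1 - Polynomial.X^2) * P.derivative with hQ1
  set Q2 : Polynomial ℝ :=
    Polynomial.C (1-m) * Polynomial.X * Q1 + (1 - Polynomial.X^2) * Q1.derivative with hQ2
  have hLF : ∀ y ∈ Set.Ioo (-1:ℝ) 1, Lfun ℓ m y = K * ((1 - y^2)^s * P.eval y) := by
    intro y hy
    have hw : 0 < 1 - y^2 := by nlinarith [hy.1, hy.2]
    have hiter := iteratedDeriv_rpow (m + (j:ℝ)) j y hy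
    rw [show m + (j:ℝ) - (j:ℝ) = m by ring] at hiter
    simp only [Lfun, Yfun, hfloor, jacobiP, hiter]
    rw [Real.sqrt_eq_rpow]
    have e1 : (1 - y^2)^(1/2:ℝ) * ((1-y^2)^(m/2) * ((1-y^2)^(-m) * (1-y^2)^m))
        = (1-y^2)^s := by
      rw [← Real.rpow_add hw, ← Real.rpow_add hw, ← Real.rpow_add hw]
      congr 1; rw [hs]; ring
    linear_combination (cConst ℓ m * ((-1:ℝ)^j / (2^j * (Nat.factorial j : ℝ))) * P.eval y) * e1
  have hF1 : ∀ y ∈ Set.Ioo (-1:ℝ) 1,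
      HasDerivAt (fun t => K * ((1 - t^2)^s * P.eval t))
        (K * ((1-y^2)^(s-1) * Q1.eval y)) y := by
    intro y hy
    have hw : 0 < 1 - y^2 := by nlinarith [hy.1, hy.2]
    have h := ((hasDerivAt_rpoly s P hw).const_mul K)
    refine h.congr_deriv ?_
    simp only [hQ1, Polynomial.eval_add, Polynomial.eval_mul, Polynomial.eval_sub,
      Polynomial.eval_one, Polynomial.eval_pow, Polynomial.eval_X, Polynomial.eval_C,
      Polynomial.eval_neg]
    rw [hs]; ring
  have hG1 : ∀ y ∈ Set.Ioo (-1:ℝ) 1,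
      HasDerivAt (fun t => K * ((1 - t^2)^(s-1) * Q1.eval t))
        (K * ((1-y^2)^(s-1-1) * Q2.eval y)) y := by
    intro y hy
    have hw : 0 < 1 - y^2 := by nlinarith [hy.1, hy.2]
    have h := ((hasDerivAt_rpoly (s-1) Q1 hw).const_mul K)
    refine h.congr_deriv ?_
    simp only [hQ2, Polynomial.eval_add, Polynomial.eval_mul, Polynomial.eval_sub,
      Polynomial.eval_one, Polynomial.eval_pow, Polynomial.eval_X, Polynomial.eval_C,
      Polynomial.eval_neg]
    rw [hs]; ring
  have hd1 : ∀ y ∈ Set.Ioo (-1:ℝ) 1,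
      deriv (Lfun ℓ m) y = K * ((1-y^2)^(s-1) * Q1.eval y) := by
    intro y hy
    have hev : Lfun ℓ m =ᶠ[nhds y] fun t => K * ((1 - t^2)^s * P.eval t) :=
      Filter.eventually_of_mem (isOpen_Ioo.mem_nhds hy) hLF
    rw [hev.deriv_eq, (hF1 y hy).deriv]
  have hdev : ∀ x ∈ Set.Ioo (-1:ℝ) 1,
      deriv (Lfun ℓ m) =ᶠ[nhds x] fun t => K * ((1 - t^2)^(s-1) * Q1.eval t) := by
    intro x hx
    exact Filter.eventually_of_mem (isOpen_Ioo.mem_nhds hx) hd1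
  constructor
  · intro x hx
    refine ⟨?_, ?_⟩
    · have hev : Lfun ℓ m =ᶠ[nhds x] fun t => K * ((1 - t^2)^s * P.eval t) :=
        Filter.eventually_of_mem (isOpen_Ioo.mem_nhds hx) hLF
      exact hev.differentiableAt_iff.mpr (hF1 x hx).differentiableAt
    · exact (hdev x hx).differentiableAt_iff.mpr (hG1 x hx).differentiableAt
  · intro x hx
    have hw : 0 < 1 - x^2 := by nlinarith [hx.1, hx.2]
    have hlpos : 0 < ℓ := by rw [hl]; positivity
    have ha : ℓ^2 * (aPt ℓ m)^2 = ℓ^2 - m^2 := by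
      have hb : (1:ℝ) - bPt ℓ m ^ 2 = 1 - (m/ℓ)^2 := by rw [bPt]
      have hnn : (0:ℝ) ≤ 1 - (m/ℓ)^2 := by
        have hml : m / ℓ ≤ 1 := by
          rw [div_le_one hlpos, hl]; have : (0:ℝ) ≤ (j:ℝ) := Nat.cast_nonneg j; linarith
        have h0 : 0 ≤ m / ℓ := div_nonneg hm0 hlpos.le
        nlinarith
      rw [aPt, hb, Real.sq_sqrt hnn]
      field_simp
    have hODE : (1-x^2) * P.derivative.derivative.eval x
        - 2*(m+1)*x*P.derivative.eval x + (j:ℝ)*((j:ℝ)+2*m+1)*P.eval x = 0 := by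
      have h := congrArg (Polynomial.eval x) (jacobi_ode m j)
      simpa using h
    have key : Q2.eval x = (ℓ^2*(x^2 - (aPt ℓ m)^2) - (3+x^2)/4) * P.eval x := by
      simp only [hQ2, hQ1, derivative_mul, derivative_add, derivative_sub, derivative_one,
        derivative_pow, derivative_X, derivative_C,
        Polynomial.eval_add, Polynomial.eval_mul, Polynomial.eval_sub,
        Polynomial.eval_one, Polynomial.eval_pow, Polynomial.eval_X, Polynomial.eval_C,
        Polynomial.eval_neg, Polynomial.eval_zero]
      rw [hl] at ha ⊢
      push_cast
      linear_combination (1-x^2) * hODE + (P.eval x) * ha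
    rw [(hdev x hx).deriv_eq, (hG1 x hx).deriv, hLF x hx]
    have hs2 : (1-x^2:ℝ)^s = (1-x^2)^(s-1-1) * (1-x^2)^(2:ℕ) := by
      rw [← Real.rpow_natCast (1-x^2) 2, ← Real.rpow_add hw]
      congr 1; push_cast; ring
    rw [Qfun, hs2, key]
    field_simp
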